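/- Let F be a finite field with q elements, let P be a polynomial in F[X_1, …, X_μ], and fix a monomial ordering ≺. Let I be the ideal of F[X_1, …, X_μ] generated by P together with X_1^q−X_1, …, X_μ^q−X_μ, and let Δ_≺(I) be its footprint, i.e., the set of monomials that do not occur as the leading monomial of any nonzero polynomial in I. Then the number of points (x_1, …, x_μ) in F^μ with P(x_1, …, x_μ) = 0 equals |Δ_≺(I)|; equivalently, the number of points with P(x_1, …, x_μ) ≠ 0 equals q^μ − |Δ_≺(I)|. -/
import Mathlib

/-- The leading monomial (exponent vector) of a polynomial `f` with respect to a monomial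
order `m`: the `m`-largest element of the support of `f` (and `0` for the zero polynomial). -/
noncomputable def leadingExp {σ K : Type*} [CommSemiring K] (m : MonomialOrder σ)
    (f : MvPolynomial σ K) : σ →₀ ℕ :=
  m.toSyn.symm (f.support.sup fun d => m.toSyn d)

/-- The footprint `Δ_≺(I)` of an ideal `I` with respect to a monomial order: the set of
monomials (exponent vectors) that are not the leading monomial of any nonzero element of `I`. -/
def footprint {σ K : Type*} [CommSemiring K] (m : MonomialOrder σ)
    (I : Ideal (MvPolynomial σ K)) : Set (σ →₀ ℕ) :=
  {d | ∀ g ∈ I, g ≠ 0 → leadingExp m g ≠ d}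

open MvPolynomial

section Aux
variable {σ K : Type*} [Field K] (m : MonomialOrder σ)

lemma leadingExp_mem_support {f : MvPolynomial σ K} (hf : f ≠ 0) :
    leadingExp m f ∈ f.support := by
  obtain ⟨d, hd, hsup⟩ := Finset.exists_mem_eq_sup f.support
    (MvPolynomial.support_nonempty.mpr hf) (fun d => m.toSyn d)
  rw [leadingExp, hsup]
  simpa using hd

lemma le_leadingExp {f : MvPolynomial σ K} {d : σ →₀ ℕ} (hd : d ∈ f.support) :
    m.toSyn d ≤ m.toSyn (leadingExp m f) := by
  rw [leadingExp, AddEquiv.apply_symm_apply]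
  exact Finset.le_sup hd

lemma leadingExp_lt_of (d : σ →₀ ℕ) {f : MvPolynomial σ K} (hf : f ≠ 0)
    (h0 : MvPolynomial.coeff d f = 0)
    (hhi : ∀ e, m.toSyn d < m.toSyn e → MvPolynomial.coeff e f = 0) :
    m.toSyn (leadingExp m f) < m.toSyn d := by
  have hmem := leadingExp_mem_support m hf
  rw [MvPolynomial.mem_support_iff] at hmem
  rcases lt_or_ge (m.toSyn (leadingExp m f)) (m.toSyn d) with h | h
  · exact h
  · rcases h.lt_or_eq with h | h
    · exact absurd (hhi _ h) hmem
    · have he : d = leadingExp m f := m.toSyn.injective h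
      exact absurd (he ▸ h0) hmem

lemma exists_reduction (J : Ideal (MvPolynomial σ K)) (f : MvPolynomial σ K) :
    ∃ r : MvPolynomial σ K, f - r ∈ J ∧ ↑r.support ⊆ footprint m J := by
  classical
  suffices H : ∀ a : m.syn, ∀ f : MvPolynomial σ K, m.toSyn (leadingExp m f) = a →
      ∃ r : MvPolynomial σ K, f - r ∈ J ∧ ↑r.support ⊆ footprint m J from H _ f rfl
  intro a
  induction a using WellFoundedLT.induction with
  | ind a ih =>
    intro f hfa
    by_cases hf : f = 0
    · exact ⟨0, by simp [hf], by simp⟩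
    by_cases hdΔ : leadingExp m f ∈ footprint m J
    · -- strip the leading term
      set d := leadingExp m f with hd
      set f' := f - MvPolynomial.monomial d (MvPolynomial.coeff d f) with hf'
      have hcoeffd : MvPolynomial.coeff d f' = 0 := by simp [hf']
      have hhi : ∀ e, m.toSyn d < m.toSyn e → MvPolynomial.coeff e f' = 0 := by
        intro e he
        have h1 : MvPolynomial.coeff e f = 0 := by
          by_contra hc
          exact absurd (le_leadingExp m (MvPolynomial.mem_support_iff.mpr hc)) (not_le.mpr he)
        have h2 : d ≠ e := fun h => absurd (h ▸ he) (lt_irrefl _)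
        simp [hf', MvPolynomial.coeff_monomial, h1, if_neg h2]
      by_cases hf'0 : f' = 0
      · refine ⟨MvPolynomial.monomial d (MvPolynomial.coeff d f), by simp [← hf', hf'0], ?_⟩
        refine Set.Subset.trans (Finset.coe_subset.mpr (MvPolynomial.support_monomial_subset)) ?_
        simpa using hdΔ
      · obtain ⟨r', hr'1, hr'2⟩ := ih (m.toSyn (leadingExp m f'))
          (by rw [← hfa]; exact leadingExp_lt_of m d hf'0 hcoeffd hhi) f' rfl
        refine ⟨MvPolynomial.monomial d (MvPolynomial.coeff d f) + r', ?_, ?_⟩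
        · have : f - (MvPolynomial.monomial d (MvPolynomial.coeff d f) + r') = f' - r' := by
            rw [hf']; ring
          rw [this]; exact hr'1
        · refine Set.Subset.trans (Finset.coe_subset.mpr (MvPolynomial.support_add)) ?_
          rw [Finset.coe_union]
          refine Set.union_subset ?_ hr'2
          refine Set.Subset.trans (Finset.coe_subset.mpr (MvPolynomial.support_monomial_subset)) ?_
          simpa using hdΔ
    · -- cancel with an element of J
      simp only [footprint, Set.mem_setOf_eq] at hdΔ
      push_neg at hdΔ
      obtain ⟨g, hgJ, hg0, hgl⟩ := hdΔ
      set d := leadingExp m f with hd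
      have hgd : MvPolynomial.coeff d g ≠ 0 := by
        rw [← hgl]; exact MvPolynomial.mem_support_iff.mp (leadingExp_mem_support m hg0)
      set c := MvPolynomial.coeff d f / MvPolynomial.coeff d g with hc
      set f' := f - MvPolynomial.C c * g with hf'
      have hcoeffd : MvPolynomial.coeff d f' = 0 := by
        simp [hf', MvPolynomial.coeff_C_mul, hc, div_mul_cancel₀ _ hgd]
      have hhi : ∀ e, m.toSyn d < m.toSyn e → MvPolynomial.coeff e f' = 0 := by
        intro e he
        have h1 : MvPolynomial.coeff e f = 0 := by
          by_contra hcon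
          exact absurd (le_leadingExp m (MvPolynomial.mem_support_iff.mpr hcon)) (not_le.mpr he)
        have h2 : MvPolynomial.coeff e g = 0 := by
          by_contra hcon
          have := le_leadingExp m (MvPolynomial.mem_support_iff.mpr hcon)
          rw [hgl] at this
          exact absurd this (not_le.mpr he)
        simp [hf', MvPolynomial.coeff_C_mul, h1, h2]
      by_cases hf'0 : f' = 0
      · refine ⟨0, ?_, by simp⟩
        have : f = MvPolynomial.C c * g := by
          have := sub_eq_zero.mp hf'0; simpa using this
        rw [sub_zero, this]
        exact Ideal.mul_mem_left _ _ hgJ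
      · obtain ⟨r', hr'1, hr'2⟩ := ih (m.toSyn (leadingExp m f'))
          (by rw [← hfa]; exact leadingExp_lt_of m d hf'0 hcoeffd hhi) f' rfl
        refine ⟨r', ?_, hr'2⟩
        have : f - r' = MvPolynomial.C c * g + (f' - r') := by rw [hf']; ring
        rw [this]
        exact Ideal.add_mem _ (Ideal.mul_mem_left _ _ hgJ) hr'1

lemma footprint_subset_box (J : Ideal (MvPolynomial σ K)) {q : ℕ} (hq : 2 ≤ q)
    (hJ : ∀ i : σ, (X i : MvPolynomial σ K) ^ q - X i ∈ J) :
    footprint m J ⊆ {d : σ →₀ ℕ | ∀ i, d i ≤ q - 1} := by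
  classical
  intro d hd
  intro i
  by_contra hi
  push_neg at hi
  have hqd : q ≤ d i := by omega
  have hsingle : Finsupp.single i q ≤ d := by
    rw [Finsupp.single_le_iff]
    exact hqd
  set e := d - Finsupp.single i q + Finsupp.single i 1 with he
  have hei : e i = d i - q + 1 := by
    simp [he, Finsupp.tsub_apply]
  have hej : ∀ j, j ≠ i → e j = d j := by
    intro j hj
    simp [he, Finsupp.tsub_apply, Finsupp.single_apply, Ne.symm hj]
  have hed : e ≠ d := by
    intro h
    have := congrFun (congrArg (fun f : σ →₀ ℕ => (f : σ → ℕ)) h) i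
    simp only [hei] at this
    omega
  have hele : e ≤ d := by
    rw [Finsupp.le_def]
    intro j
    by_cases hj : j = i
    · subst hj; rw [hei]; omega
    · rw [hej j hj]
  set g := MvPolynomial.monomial (d - Finsupp.single i q) (1 : K) * (X i ^ q - X i) with hg
  have hgJ : g ∈ J := Ideal.mul_mem_left _ _ (hJ i)
  have hgeq : g = MvPolynomial.monomial d 1 - MvPolynomial.monomial e 1 := by
    rw [hg, mul_sub, ← MvPolynomial.monomial_add_single, ← pow_one (X i : MvPolynomial σ K),
      ← MvPolynomial.monomial_add_single, tsub_add_cancel_of_le hsingle, he]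
  have hcd : MvPolynomial.coeff d g = 1 := by
    rw [hgeq]
    simp [MvPolynomial.coeff_monomial, hed]
  have hg0 : g ≠ 0 := fun h => by simp [h] at hcd
  have hdsupp : d ∈ g.support := MvPolynomial.mem_support_iff.mpr (by rw [hcd]; norm_num)
  have hsupp : g.support ⊆ {d, e} := by
    intro x hx
    rw [MvPolynomial.mem_support_iff] at hx
    by_contra hxm
    simp only [Finset.mem_insert, Finset.mem_singleton] at hxm
    push_neg at hxm
    apply hx
    rw [hgeq]
    simp [MvPolynomial.coeff_monomial, Ne.symm hxm.1, Ne.symm hxm.2]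
  have hled : leadingExp m g = d := by
    have h1 := hsupp (leadingExp_mem_support m hg0)
    simp only [Finset.mem_insert, Finset.mem_singleton] at h1
    rcases h1 with h1 | h1
    · exact h1
    · exfalso
      have h2 := le_leadingExp m hdsupp
      rw [h1] at h2
      have h3 : m.toSyn e < m.toSyn d := m.toSyn_strictMono (lt_of_le_of_ne hele hed)
      exact absurd h2 (not_le.mpr h3)
  exact hd g hgJ hg0 hled

lemma span_vanish {S : Set (MvPolynomial σ K)} {x : σ → K}
    (h : ∀ g ∈ S, MvPolynomial.eval x g = 0) :
    ∀ g ∈ Ideal.span S, MvPolynomial.eval x g = 0 := by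
  intro g hg
  induction hg using Submodule.span_induction with
  | mem g hgS => exact h g hgS
  | zero => simp
  | add a b _ _ ha hb => simp [ha, hb]
  | smul a b _ hb => simp [smul_eq_mul, hb]

end Aux

universe uK in
lemma eq_zero_of_eval_eq_zero_poly {K : Type uK} [Field K] [Fintype K] {n : ℕ}
    (p : MvPolynomial (Fin n) K) (h : ∀ v : Fin n → K, MvPolynomial.eval v p = 0)
    (hp : ∀ s ∈ p.support, ∀ i, (s : Fin n →₀ ℕ) i ≤ Fintype.card K - 1) : p = 0 := by
  classical
  set e : Fin n ≃ ULift.{uK} (Fin n) := Equiv.ulift.symm with he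
  set p' : MvPolynomial (ULift.{uK} (Fin n)) K := MvPolynomial.rename e p with hp'
  have h0 : p' = 0 := by
    apply MvPolynomial.eq_zero_of_eval_eq_zero
    · intro v
      rw [hp', MvPolynomial.eval_rename]
      exact h _
    · rw [MvPolynomial.mem_restrictDegree]
      intro s hs i
      rw [hp', MvPolynomial.support_rename_of_injective e.injective] at hs
      obtain ⟨t, ht, rfl⟩ := Finset.mem_image.mp hs
      have : i = e (e.symm i) := (e.apply_symm_apply i).symm
      rw [this, Finsupp.mapDomain_apply e.injective]
      exact hp t ht _
  exact MvPolynomial.rename_injective (R := K) _ e.injective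
    (by rw [map_zero]; exact h0)

/-- Let `F` be a finite field with `q` elements, `P ∈ F[X_1, …, X_μ]`, and let `I` be the
ideal generated by `P` and `X_1^q - X_1, …, X_μ^q - X_μ`.  Then the number of zeros of `P`
in `F^μ` equals the cardinality of the footprint `Δ_≺(I)`; equivalently, the number of
points where `P` is nonzero equals `q^μ - |Δ_≺(I)|`. -/
theorem card_zeros_eq_card_footprint {F : Type*} [Field F] [Fintype F] (q μ : ℕ)
    (hq : Fintype.card F = q) (m : MonomialOrder (Fin μ)) (P : MvPolynomial (Fin μ) F) :
    {x : Fin μ → F | MvPolynomial.eval x P = 0}.ncard =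
      (footprint m (Ideal.span ({P} ∪
        Set.range fun i : Fin μ => (MvPolynomial.X i : MvPolynomial (Fin μ) F) ^ q
          - MvPolynomial.X i))).ncard ∧
    {x : Fin μ → F | MvPolynomial.eval x P ≠ 0}.ncard =
      q ^ μ - (footprint m (Ideal.span ({P} ∪
        Set.range fun i : Fin μ => (MvPolynomial.X i : MvPolynomial (Fin μ) F) ^ q
          - MvPolynomial.X i))).ncard := by
  classical
  subst hq
  set q := Fintype.card F with hqdef
  have hq2 : 2 ≤ q := Fintype.one_lt_card
  set S : Set (MvPolynomial (Fin μ) F) :=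
    {P} ∪ Set.range fun i : Fin μ => (X i : MvPolynomial (Fin μ) F) ^ q - X i with hS
  set J : Ideal (MvPolynomial (Fin μ) F) := Ideal.span S with hJdef
  set V : Set (Fin μ → F) := {x | eval x P = 0} with hVdef
  set Δ := footprint m J with hΔdef
  have hfe : ∀ i : Fin μ, (X i : MvPolynomial (Fin μ) F) ^ q - X i ∈ J :=
    fun i => Ideal.subset_span (Or.inr ⟨i, rfl⟩)
  have hPJ : P ∈ J := Ideal.subset_span (Or.inl rfl)
  have hvanX : ∀ (x : Fin μ → F) (i : Fin μ),
      eval x ((X i : MvPolynomial (Fin μ) F) ^ q - X i) = 0 := by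
    intro x i
    have h : (x i) ^ q = x i := FiniteField.pow_card _
    simp [h]
  have hvanJ : ∀ g ∈ J, ∀ x ∈ V, eval x g = 0 := by
    intro g hg x hx
    refine span_vanish ?_ g hg
    rintro g' (rfl | ⟨i, rfl⟩)
    · exact hx
    · exact hvanX x i
  set J0 : Ideal (MvPolynomial (Fin μ) F) :=
    Ideal.span (Set.range fun i : Fin μ => (X i : MvPolynomial (Fin μ) F) ^ q - X i) with hJ0def
  have hJ0J : J0 ≤ J := Ideal.span_mono Set.subset_union_right
  have hvanJ0 : ∀ g ∈ J0, ∀ x : Fin μ → F, eval x g = 0 := by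
    intro g hg x
    refine span_vanish ?_ g hg
    rintro g' ⟨i, rfl⟩
    exact hvanX x i
  have hmemJ0 : ∀ g : MvPolynomial (Fin μ) F, (∀ x, eval x g = 0) → g ∈ J0 := by
    intro g hg
    obtain ⟨r, hr1, hr2⟩ := exists_reduction m J0 g
    have hbox : ∀ s ∈ r.support, ∀ i, (s : Fin μ →₀ ℕ) i ≤ q - 1 := fun s hs =>
      footprint_subset_box m J0 hq2 (fun i => Ideal.subset_span ⟨i, rfl⟩) (hr2 hs)
    have hr0 : r = 0 := by
      apply eq_zero_of_eval_eq_zero_poly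
      · intro v
        have h1 := hvanJ0 _ hr1 v
        rw [map_sub, hg v, zero_sub, neg_eq_zero] at h1
        exact h1
      · exact hbox
    rw [← sub_zero g, ← hr0]
    exact hr1
  have hmemJ : ∀ f : MvPolynomial (Fin μ) F, (∀ x ∈ V, eval x f = 0) → f ∈ J := by
    intro f hf
    have key : f = f * P ^ (q - 1) + f * (1 - P ^ (q - 1)) := by ring
    have h1 : f * P ^ (q - 1) ∈ J :=
      Ideal.mul_mem_left _ _ (Ideal.pow_mem_of_mem J hPJ _ (by omega))
    have h2 : f * (1 - P ^ (q - 1)) ∈ J0 := by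
      apply hmemJ0
      intro x
      by_cases hx : eval x P = 0
      · have hxV : x ∈ V := hx
        simp [hf x hxV]
      · have h : (eval x P) ^ (q - 1) = 1 := FiniteField.pow_card_sub_one_eq_one _ hx
        simp [h]
    rw [key]
    exact Ideal.add_mem _ h1 (hJ0J h2)
  -- finiteness of the footprint
  have hΔbox := footprint_subset_box m J hq2 hfe
  have hΔfin : Δ.Finite := by
    apply Set.Finite.subset
      (Finset.Iic (Finsupp.equivFunOnFinite.symm fun _ : Fin μ => q - 1)).finite_toSet
    intro d hd
    simp only [Finset.coe_Iic, Set.mem_Iic]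
    rw [Finsupp.le_def]
    intro i
    simpa using hΔbox hd i
  have hVfin : V.Finite := Set.toFinite V
  set Δ' := hΔfin.toFinset with hΔ'
  set V' := hVfin.toFinset with hV'
  have hΔ'mem : ∀ d, d ∈ Δ' ↔ d ∈ Δ := fun d => hΔfin.mem_toFinset
  have hV'mem : ∀ x, x ∈ V' ↔ x ∈ V := fun x => hVfin.mem_toFinset
  set polyOf : (↥Δ' → F) → MvPolynomial (Fin μ) F :=
    fun φ => ∑ d ∈ Δ'.attach, MvPolynomial.monomial d.1 (φ d) with hpolyOf
  have hcoeff : ∀ (φ : ↥Δ' → F) (e : Fin μ →₀ ℕ), MvPolynomial.coeff e (polyOf φ) =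
      if he : e ∈ Δ' then φ ⟨e, he⟩ else 0 := by
    intro φ e
    rw [hpolyOf]
    rw [MvPolynomial.coeff_sum]
    split
    · next he =>
      rw [Finset.sum_eq_single (⟨e, he⟩ : ↥Δ')]
      · simp [MvPolynomial.coeff_monomial]
      · intro b _ hb
        have hbe : (b : Fin μ →₀ ℕ) ≠ e := fun h => hb (Subtype.ext h)
        simp [MvPolynomial.coeff_monomial, hbe]
      · intro h; exact absurd (Finset.mem_attach _ _) h
    · next he =>
      apply Finset.sum_eq_zero
      intro b _
      have hbe : (b : Fin μ →₀ ℕ) ≠ e := fun h => he (h ▸ b.2)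
      simp [MvPolynomial.coeff_monomial, hbe]
  have hsuppPoly : ∀ φ : ↥Δ' → F, (polyOf φ).support ⊆ Δ' := by
    intro φ d hd
    by_contra h
    rw [MvPolynomial.mem_support_iff, hcoeff, dif_neg h] at hd
    exact hd rfl
  set Φ : (↥Δ' → F) → (↥V' → F) := fun φ x => eval (x : Fin μ → F) (polyOf φ) with hΦ
  have hinj : Function.Injective Φ := by
    intro φ1 φ2 h
    have hvan : ∀ x ∈ V, eval x (polyOf φ1 - polyOf φ2) = 0 := by
      intro x hx
      have h1 : eval x (polyOf φ1) = eval x (polyOf φ2) := congrFun h ⟨x, (hV'mem x).mpr hx⟩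
      simp [h1]
    have hJmem : polyOf φ1 - polyOf φ2 ∈ J := hmemJ _ hvan
    have h0 : polyOf φ1 - polyOf φ2 = 0 := by
      by_contra hne
      have hLmem := leadingExp_mem_support m hne
      have hsub : (polyOf φ1 - polyOf φ2).support ⊆ Δ' := by
        intro d hd
        rcases Finset.mem_union.mp (MvPolynomial.support_sub _ _ _ hd) with h' | h'
        · exact hsuppPoly _ h'
        · exact hsuppPoly _ h'
      have hLΔ : leadingExp m (polyOf φ1 - polyOf φ2) ∈ Δ := (hΔ'mem _).mp (hsub hLmem)
      exact hLΔ _ hJmem hne rfl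
    funext d
    have hco := congrArg (MvPolynomial.coeff d.1) (sub_eq_zero.mp h0)
    rw [hcoeff, hcoeff, dif_pos d.2, dif_pos d.2] at hco
    exact hco
  have hsurj : Function.Surjective Φ := by
    intro ψ
    set f : MvPolynomial (Fin μ) F :=
      ∑ x ∈ V'.attach, MvPolynomial.C (ψ x) * MvPolynomial.indicator (x : Fin μ → F) with hf
    have hevalf : ∀ x : ↥V', eval (x : Fin μ → F) f = ψ x := by
      intro x
      rw [hf, map_sum]
      rw [Finset.sum_eq_single x]
      · simp [MvPolynomial.eval_indicator_apply_eq_one]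
      · intro b _ hb
        have hbx : (x : Fin μ → F) ≠ (b : Fin μ → F) := fun h => hb (Subtype.ext h).symm
        simp [MvPolynomial.eval_indicator_apply_eq_zero _ _ hbx]
      · intro h; exact absurd (Finset.mem_attach _ _) h
    obtain ⟨r, hr1, hr2⟩ := exists_reduction m J f
    refine ⟨fun d => MvPolynomial.coeff d.1 r, ?_⟩
    have hpoly : polyOf (fun d => MvPolynomial.coeff d.1 r) = r := by
      apply MvPolynomial.ext
      intro e
      rw [hcoeff]
      split
      · next he => rfl
      · next he =>
        symm
        rw [← MvPolynomial.notMem_support_iff]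
        intro hmem
        exact he ((hΔ'mem e).mpr (hr2 hmem))
    funext x
    show eval (x : Fin μ → F) (polyOf _) = ψ x
    rw [hpoly]
    have h1 : eval (x : Fin μ → F) (f - r) = 0 := hvanJ _ hr1 _ ((hV'mem x).mp x.2)
    rw [map_sub, sub_eq_zero] at h1
    rw [← h1]
    exact hevalf x
  have hcards : Fintype.card (↥Δ' → F) = Fintype.card (↥V' → F) :=
    Fintype.card_congr (Equiv.ofBijective Φ ⟨hinj, hsurj⟩)
  rw [Fintype.card_fun, Fintype.card_fun, Fintype.card_coe, Fintype.card_coe] at hcards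
  have hcard : Δ'.card = V'.card := Nat.pow_right_injective hq2 hcards
  have hfirst : V.ncard = Δ.ncard := by
    rw [Set.ncard_eq_toFinset_card _ hVfin, Set.ncard_eq_toFinset_card _ hΔfin]
    exact hcard.symm
  refine ⟨hfirst, ?_⟩
  have hcompl : {x : Fin μ → F | eval x P ≠ 0} = Vᶜ := by
    ext x
    simp [hVdef]
  rw [hcompl]
  have hsum := Set.ncard_add_ncard_compl V
  have hcardtype : Nat.card (Fin μ → F) = q ^ μ := by
    rw [Nat.card_eq_fintype_card, Fintype.card_fun, Fintype.card_fin]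
  omega
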